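/- arXiv:1403.6866 — 2 statements merged into one kernel-verified Lean document; each statement's English description precedes it below -/
import Mathlib

section
/- If X is a k-space and C is a compact Hausdorff space, then the product space X × C (with the usual product topology) is a k-space, i.e. X × C = X ×_k C where ×_k denotes the k-ified product. -/
open TopologicalSpace Topology

universe u

/-- The k-ification: the final topology on `X` relative to all continuous maps
from compact Hausdorff spaces into `X`. -/
def kTop (X : Type u) [TopologicalSpace X] : TopologicalSpace X :=
  ⨆ (C : CompHaus.{u}) (g : C → X) (_ : Continuous g),
    TopologicalSpace.coinduced g inferInstance

lemma kTop_le (X : Type u) [tX : TopologicalSpace X] : kTop X ≤ tX :=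
  iSup_le fun _ => iSup_le fun _ => iSup_le fun hg => hg.coinduced_le

set_option maxRecDepth 10000 in
set_option maxHeartbeats 1000000 in
lemma isOpen_kTop_iff {X : Type u} [tX : TopologicalSpace X] {U : Set X} :
    IsOpen[kTop X] U ↔
      ∀ (K : CompHaus.{u}) (g : K → X), Continuous g → IsOpen (g ⁻¹' U) := by
  rw [kTop, isOpen_iSup_iff]
  refine forall_congr' fun K => ?_
  rw [isOpen_iSup_iff]
  refine forall_congr' fun g => ?_
  rw [isOpen_iSup_iff]
  exact forall_congr' fun hg => isOpen_coinduced

theorem kSpace_prod_compHaus {X C : Type u}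
    [tX : TopologicalSpace X] [tC : TopologicalSpace C]
    [CompactSpace C] [T2Space C] (hX : kTop X = tX) :
    kTop (X × C) = (inferInstance : TopologicalSpace (X × C)) := by
  refine le_antisymm (kTop_le _) (isOpen_implies_isOpen_iff.1 fun U hU => ?_)
  rw [isOpen_kTop_iff] at hU
  rw [isOpen_prod_iff]
  intro x₀ c₀ hxc
  -- the fiber over x₀ is open in C
  have hfib : IsOpen {c : C | (x₀, c) ∈ U} :=
    hU (CompHaus.of C) (fun c => (x₀, c)) (Continuous.prodMk_right x₀)
  obtain ⟨t, htn, htc, hts⟩ := exists_mem_nhds_isClosed_subset (hfib.mem_nhds hxc)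
  haveI : CompactSpace t := isCompact_iff_compactSpace.1 htc.isCompact
  set V : Set X := {x | ∀ c ∈ t, (x, c) ∈ U} with hVdef
  have hVopen : IsOpen V := by
    rw [← hX, isOpen_kTop_iff]
    intro K f hf
    have hg : Continuous (fun p : ↥t × K => (f p.2, (p.1 : C))) :=
      (hf.comp continuous_snd).prodMk (continuous_subtype_val.comp continuous_fst)
    have hW := hU (CompHaus.of (↥t × K)) _ hg
    have key : f ⁻¹' V =
        (Prod.snd '' ((fun p : ↥t × K => (f p.2, (p.1 : C))) ⁻¹' U)ᶜ)ᶜ := by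
      ext k
      constructor
      · rintro (h : ∀ c ∈ t, (f k, c) ∈ U) ⟨⟨c, k'⟩, hp, rfl⟩
        exact hp (h c c.2)
      · intro h c hc
        by_contra hcu
        exact h ⟨(⟨c, hc⟩, k), hcu, rfl⟩
    rw [key]
    exact (isClosedMap_snd_of_compactSpace _ hW.isClosed_compl).isOpen_compl
  refine ⟨V, interior t, hVopen, isOpen_interior, fun c hc => hts hc,
    mem_interior_iff_mem_nhds.2 htn, ?_⟩
  rintro ⟨x, c⟩ ⟨hx, hc⟩
  exact hx c (interior_subset hc)
end

section
/- Admissible condition for k-spaces: if X, Y, Z are k-spaces and g : X → kM(Y,Z) is continuous, then the function f : X ×_k Y → Z defined by f(x,y) = g(x)(y) is continuous. -/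
open TopologicalSpace Topology

universe u

lemma kTop_le_self {W : Type u} [tW : TopologicalSpace W] : kTop W ≤ tW := by
  refine iSup_le fun C => iSup_le fun g => iSup_le fun hg => ?_
  exact continuous_iff_coinduced_le.mp hg

theorem kTop_admissible_condition {X Y Z : Type u}
    [tX : TopologicalSpace X] [tY : TopologicalSpace Y] [tZ : TopologicalSpace Z]
    (hX : kTop X = tX) (hY : kTop Y = tY) (hZ : kTop Z = tZ)
    (g : X → C(Y, Z)) (hg : Continuous[tX, kTop C(Y, Z)] g) :
    Continuous[kTop (X × Y), tZ] (fun p : X × Y => g p.1 p.2) := by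
  rw [kTop]
  refine continuous_iSup_dom.mpr fun C => continuous_iSup_dom.mpr fun h =>
    continuous_iSup_dom.mpr fun hh => continuous_coinduced_dom.mpr ?_
  -- h : C → X × Y is continuous, C compact Hausdorff
  have hg' : Continuous[tX, _] g := continuous_le_rng kTop_le_self hg
  have hk : Continuous fun c : C => (h c).2 := continuous_snd.comp hh
  set k : C(C, Y) := ⟨fun c => (h c).2, hk⟩
  have hG : Continuous fun c : C => ((g (h c).1).comp k) :=
    (ContinuousMap.continuous_precomp k).comp (hg'.comp (continuous_fst.comp hh))
  have : (fun c : C => g (h c).1 (h c).2) =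
      fun c : C => ((g (h c).1).comp k) c := rfl
  rw [show ((fun p : X × Y => g p.1 p.2) ∘ h) = fun c : C => ((g (h c).1).comp k) c from rfl]
  haveI : CompactSpace C := C.is_compact
  haveI : T2Space C := C.is_hausdorff
  haveI : WeaklyLocallyCompactSpace C := instWeaklyLocallyCompactSpaceOfCompactSpace
  haveI : R1Space C := T2Space.r1Space
  haveI : LocallyCompactSpace C := WeaklyLocallyCompactSpace.locallyCompactSpace
  exact (continuous_eval : Continuous fun p : C(C, Z) × C => p.1 p.2).comp (hG.prodMk continuous_id)
end
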